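/- arXiv:1812.00191 — 7 statements merged into one kernel-verified Lean document; each statement's English description precedes it below -/
import Mathlib

section
/- For all β > 0 and γ > 0, the integral identity ∫₀^∞ (1/x)·exp(−β/x − γx) dx = 2·K₀(2√(βγ)) holds, where K₀(z) = ∫₀^∞ exp(−z·cosh t) dt. -/
open Real MeasureTheory

/-- The modified Bessel function of the second kind of order 0,
`K₀(z) = ∫₀^∞ exp(−z·cosh t) dt`. -/
noncomputable def besselK0 (z : ℝ) : ℝ :=
  ∫ t in Set.Ioi (0 : ℝ), Real.exp (-z * Real.cosh t)

/-- For all `β > 0` and `γ > 0`,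
`∫₀^∞ (1/x)·exp(−β/x − γx) dx = 2·K₀(2√(βγ))`. -/
theorem integral_inv_mul_exp_eq_besselK0 (β γ : ℝ) (hβ : 0 < β) (hγ : 0 < γ) :
    ∫ x in Set.Ioi (0 : ℝ), (1 / x) * Real.exp (-β / x - γ * x) =
      2 * besselK0 (2 * Real.sqrt (β * γ)) := by
  set a : ℝ := Real.sqrt β / Real.sqrt γ with ha_def
  have hsb : 0 < Real.sqrt β := Real.sqrt_pos.2 hβ
  have hsg : 0 < Real.sqrt γ := Real.sqrt_pos.2 hγ
  have ha : 0 < a := div_pos hsb hsg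
  have himg : (fun t : ℝ => a * Real.exp t) '' Set.univ = Set.Ioi 0 := by
    rw [Set.image_univ]
    ext x
    simp only [Set.mem_range, Set.mem_Ioi]
    constructor
    · rintro ⟨t, rfl⟩
      positivity
    · intro hx
      exact ⟨Real.log (x / a), by rw [Real.exp_log (by positivity)]; field_simp⟩
  have hderiv : ∀ t ∈ Set.univ, HasDerivWithinAt (fun t : ℝ => a * Real.exp t)
      (a * Real.exp t) Set.univ t := fun t _ =>
    ((Real.hasDerivAt_exp t).const_mul a).hasDerivWithinAt
  have hinj : Set.InjOn (fun t : ℝ => a * Real.exp t) Set.univ := by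
    intro s _ t _ h
    simpa [ha.ne'] using Real.exp_injective (mul_left_cancel₀ ha.ne' h)
  rw [← himg, integral_image_eq_integral_abs_deriv_smul MeasurableSet.univ hderiv hinj,
    MeasureTheory.setIntegral_univ]
  have key : ∀ t : ℝ, |a * Real.exp t| • ((1 / (a * Real.exp t)) *
      Real.exp (-β / (a * Real.exp t) - γ * (a * Real.exp t)))
      = Real.exp (-(2 * Real.sqrt (β * γ)) * Real.cosh |t|) := by
    intro t
    have het : 0 < Real.exp t := Real.exp_pos t
    have hat : 0 < a * Real.exp t := by positivity
    rw [Real.cosh_abs, abs_of_pos hat, smul_eq_mul, ← mul_assoc,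
      mul_one_div_cancel hat.ne', one_mul]
    congr 1
    have hb2 : Real.sqrt β * Real.sqrt β = β := Real.mul_self_sqrt hβ.le
    have hg2 : Real.sqrt γ * Real.sqrt γ = γ := Real.mul_self_sqrt hγ.le
    have hbg : Real.sqrt β * Real.sqrt γ = Real.sqrt (β * γ) := (Real.sqrt_mul hβ.le γ).symm
    have hba : β / a = Real.sqrt (β * γ) := by
      rw [← hbg, ha_def]
      field_simp
      linear_combination -hb2
    have hga : γ * a = Real.sqrt (β * γ) := by
      rw [← hbg, ha_def]
      field_simp
      linear_combination -hg2
    have expand : -β / (a * Real.exp t) - γ * (a * Real.exp t)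
        = -(β / a) * (Real.exp t)⁻¹ - (γ * a) * Real.exp t := by
      field_simp
    rw [expand, hba, hga, Real.cosh_eq, Real.exp_neg]
    ring
  simp_rw [key]
  rw [integral_comp_abs (f := fun t => Real.exp (-(2 * Real.sqrt (β * γ)) * Real.cosh t))]
  rfl
end

section
/- For all β > 0 and γ > 0, the integral identity ∫₀^∞ exp(−β/x − γx) dx = 2·√(β/γ)·K₁(2√(βγ)) holds, where K₁(z) = ∫₀^∞ exp(−z·cosh t)·cosh t dt. -/
open Real MeasureTheory Set

lemma cosh_quadratic_lower (t : ℝ) : t ^ 2 / 4 ≤ Real.cosh t := by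
  have h := Real.sum_le_exp_of_nonneg (abs_nonneg t) 3
  have hsum : ∑ i ∈ Finset.range 3, |t| ^ i / i.factorial
      = 1 + |t| + |t| ^ 2 / 2 := by
    rw [Finset.sum_range_succ, Finset.sum_range_succ, Finset.sum_range_one]
    norm_num [Nat.factorial]
  rw [hsum] at h
  have h2 : Real.exp |t| / 2 ≤ Real.cosh |t| := by
    rw [Real.cosh_eq]
    have := Real.exp_pos (-|t|)
    linarith
  rw [Real.cosh_abs] at h2
  have hts : |t| ^ 2 = t ^ 2 := sq_abs t
  linarith [abs_nonneg t]

lemma aux_integrable {z : ℝ} (hz : 0 < z) (a : ℝ) (ha : |a| ≤ 1) :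
    Integrable (fun t : ℝ => Real.exp (a * t) * Real.exp (-z * Real.cosh t)) := by
  have hbound : ∀ t : ℝ, ‖Real.exp (a * t) * Real.exp (-z * Real.cosh t)‖
      ≤ Real.exp (4 / z) * Real.exp (-|t|) := by
    intro t
    rw [Real.norm_eq_abs, abs_of_pos (by positivity), ← Real.exp_add, ← Real.exp_add]
    apply Real.exp_le_exp.mpr
    have h1 : a * t ≤ |t| := by
      calc a * t ≤ |a * t| := le_abs_self _
        _ = |a| * |t| := abs_mul a t
        _ ≤ 1 * |t| := by gcongr
        _ = |t| := one_mul _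
    have h2 : t ^ 2 / 4 ≤ Real.cosh t := cosh_quadratic_lower t
    have h3 : 2 * |t| ≤ 4 / z + z * (t ^ 2 / 4) := by
      have ht2 : |t| ^ 2 = t ^ 2 := sq_abs t
      rw [← sub_nonneg]
      have expand : 4 / z + z * (t ^ 2 / 4) - 2 * |t| = (z * |t| / 2 - 2) ^ 2 / z := by
        field_simp; rw [← sq_abs t]; ring
      rw [expand]; positivity
    have h4 : z * (t ^ 2 / 4) ≤ z * Real.cosh t := by gcongr
    linarith
  have hexp : Integrable (fun t : ℝ => Real.exp (4 / z) * Real.exp (-|t|)) := by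
    apply Integrable.const_mul
    have h1 : IntegrableOn (fun t : ℝ => Real.exp (-|t|)) (Iic 0) := by
      apply (integrableOn_exp_Iic 0).congr_fun _ measurableSet_Iic
      intro x hx
      simp only [mem_Iic] at hx
      show Real.exp x = Real.exp (-|x|)
      rw [abs_of_nonpos hx, neg_neg]
    have h2 : IntegrableOn (fun t : ℝ => Real.exp (-|t|)) (Ioi 0) := by
      apply (exp_neg_integrableOn_Ioi 0 one_pos).congr_fun _ measurableSet_Ioi
      intro x hx
      simp only [mem_Ioi] at hx
      show Real.exp (-1 * x) = Real.exp (-|x|)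
      rw [abs_of_pos hx, neg_one_mul]
    have := h1.union h2
    rwa [Iic_union_Ioi, integrableOn_univ] at this
  refine hexp.mono' ?_ (Filter.Eventually.of_forall hbound)
  exact (((continuous_const.mul continuous_id').rexp).mul
    ((continuous_const.mul Real.continuous_cosh).rexp)).aestronglyMeasurable

/-- The modified Bessel function of the second kind of order 1,
`K₁(z) = ∫₀^∞ exp(−z·cosh t)·cosh t dt`. -/
noncomputable def besselK1 (z : ℝ) : ℝ :=
  ∫ t in Set.Ioi (0 : ℝ), Real.exp (-z * Real.cosh t) * Real.cosh t

set_option maxHeartbeats 1000000 in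
/-- For all `β > 0` and `γ > 0`,
`∫₀^∞ exp(−β/x − γx) dx = 2·√(β/γ)·K₁(2√(βγ))`. -/
theorem integral_exp_eq_besselK1 (β γ : ℝ) (hβ : 0 < β) (hγ : 0 < γ) :
    ∫ x in Set.Ioi (0 : ℝ), Real.exp (-β / x - γ * x) =
      2 * Real.sqrt (β / γ) * besselK1 (2 * Real.sqrt (β * γ)) := by
  set c : ℝ := Real.sqrt (β / γ) with hc_def
  set s : ℝ := Real.sqrt (β * γ) with hs_def
  set z : ℝ := 2 * s with hz_def
  have hc : 0 < c := Real.sqrt_pos.mpr (by positivity)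
  have hs : 0 < s := Real.sqrt_pos.mpr (by positivity)
  have hz : 0 < z := by positivity
  -- key algebraic identities
  have hcs : c * s = β := by
    rw [hc_def, hs_def, ← Real.sqrt_mul (by positivity)]
    have : β / γ * (β * γ) = β ^ 2 := by field_simp
    rw [this, Real.sqrt_sq hβ.le]
  have hgc : γ * c = s := by
    rw [hc_def, hs_def]
    rw [← Real.sqrt_sq hγ.le, ← Real.sqrt_mul (by positivity)]
    congr 1
    field_simp
    rw [Real.sq_sqrt (sq_nonneg γ)]
  -- the substituted exponent
  have hexp_eq : ∀ t : ℝ, -β / (c * Real.exp t) - γ * (c * Real.exp t)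
      = -z * Real.cosh t := by
    intro t
    have het : Real.exp t ≠ 0 := (Real.exp_pos t).ne'
    have h1 : -β / (c * Real.exp t) = -(s * Real.exp (-t)) := by
      rw [Real.exp_neg]
      field_simp [hc.ne']
      linear_combination hcs
    have h2 : γ * (c * Real.exp t) = s * Real.exp t := by
      rw [← mul_assoc, hgc]
    rw [h1, h2, Real.cosh_eq, hz_def]
    ring
  -- Step A: change of variables x = c * exp t
  have himg : (fun t : ℝ => c * Real.exp t) '' univ = Ioi (0 : ℝ) := by
    rw [image_univ]
    ext x
    simp only [mem_range, mem_Ioi]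
    constructor
    · rintro ⟨t, rfl⟩; positivity
    · intro hx
      exact ⟨Real.log (x / c), by
        rw [Real.exp_log (by positivity)]; field_simp⟩
  have hchg : ∫ x in Ioi (0 : ℝ), Real.exp (-β / x - γ * x)
      = ∫ t : ℝ, c * Real.exp t * Real.exp (-z * Real.cosh t) := by
    rw [← himg]
    rw [integral_image_eq_integral_abs_deriv_smul MeasurableSet.univ
      (fun t _ => ((Real.hasDerivAt_exp t).const_mul c).hasDerivWithinAt)
      (fun t₁ _ t₂ _ h => by
        have := mul_left_cancel₀ hc.ne' h
        exact Real.exp_injective this)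
      (fun x => Real.exp (-β / x - γ * x))]
    rw [MeasureTheory.setIntegral_univ]
    congr 1
    ext t
    rw [smul_eq_mul, abs_of_pos (by positivity), hexp_eq t]
  -- integrability
  have hint1 : Integrable (fun t : ℝ => Real.exp t * Real.exp (-z * Real.cosh t)) := by
    simpa using aux_integrable hz 1 (by norm_num)
  have hint2 : Integrable (fun t : ℝ => Real.exp (-t) * Real.exp (-z * Real.cosh t)) := by
    have := aux_integrable hz (-1) (by norm_num)
    simpa [neg_one_mul] using this
  -- Step D: replace exp t by cosh t
  have hneg : ∫ t : ℝ, Real.exp t * Real.exp (-z * Real.cosh t)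
      = ∫ t : ℝ, Real.exp (-t) * Real.exp (-z * Real.cosh t) := by
    rw [← integral_neg_eq_self (fun t : ℝ => Real.exp (-t) * Real.exp (-z * Real.cosh t))]
    simp [Real.cosh_neg]
  have hcosh : ∫ t : ℝ, Real.exp t * Real.exp (-z * Real.cosh t)
      = ∫ t : ℝ, Real.exp (-z * Real.cosh t) * Real.cosh t := by
    have hadd : (∫ t : ℝ, Real.exp t * Real.exp (-z * Real.cosh t))
        + ∫ t : ℝ, Real.exp (-t) * Real.exp (-z * Real.cosh t)
        = ∫ t : ℝ, (Real.exp t + Real.exp (-t)) * Real.exp (-z * Real.cosh t) := by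
      rw [← integral_add hint1 hint2]
      congr 1; ext t; ring
    have h2 : ∫ t : ℝ, (Real.exp t + Real.exp (-t)) * Real.exp (-z * Real.cosh t)
        = 2 * ∫ t : ℝ, Real.exp (-z * Real.cosh t) * Real.cosh t := by
      rw [← integral_const_mul]
      congr 1; ext t
      rw [Real.cosh_eq]; ring
    have := hadd
    rw [← hneg, h2] at this
    linarith
  -- Step B: besselK1 via integral_comp_abs
  have hbes : ∫ t : ℝ, Real.exp (-z * Real.cosh t) * Real.cosh t = 2 * besselK1 z := by
    have h := integral_comp_abs (f := fun t => Real.exp (-z * Real.cosh t) * Real.cosh t)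
    rw [besselK1, ← h]
    congr 1
    funext t
    rw [Real.cosh_abs]
  rw [hchg]
  have : ∫ t : ℝ, c * Real.exp t * Real.exp (-z * Real.cosh t)
      = c * ∫ t : ℝ, Real.exp t * Real.exp (-z * Real.cosh t) := by
    rw [← integral_const_mul]
    congr 1; ext t; ring
  rw [this, hcosh, hbes]
  ring
end

section
/- Let D > 0, k > 0, q > 0, R₀ > 0 and let b ∈ ℝ² with b ≠ 0. Under the uniform concentration assumption, the asymptotic channel response at a circular receiver of radius R₀ centered at b, due to continuous emission at rate q from a point transmitter at the origin, has the closed form π·R₀²·q·∫₀^∞ C(b, τ) dτ = (q·R₀²/(2D))·K₀(|b|·√(k/D)), where C(b, τ) = (1/(4πDτ))·exp(−|b|²/(4Dτ) − kτ). -/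
open Real MeasureTheory

/-- The 2D reaction–diffusion heat kernel
`C(r, τ) = (1/(4πDτ))·exp(−|r|²/(4Dτ) − kτ)` for `r ∈ ℝ²`. -/
noncomputable def heatKernel2D (D k : ℝ) (r : EuclideanSpace ℝ (Fin 2)) (τ : ℝ) : ℝ :=
  (1 / (4 * π * D * τ)) * Real.exp (-‖r‖ ^ 2 / (4 * D * τ) - k * τ)

open Set in
private lemma uca_integrableOn_Iic_of_Ici {f : ℝ → ℝ}
    (hf : IntegrableOn (fun t => f (-t)) (Ici (0:ℝ))) : IntegrableOn f (Iic (0:ℝ)) := by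
  have h_map_neg : ((volume : Measure ℝ).restrict (Ici (0:ℝ))).map Neg.neg
      = (volume : Measure ℝ).restrict (Iic (0:ℝ)) := by
    conv => rhs; rw [← Measure.map_neg_eq_self (volume : Measure ℝ),
      measurableEmbedding_neg.restrict_map]
    simp
  rw [IntegrableOn, ← h_map_neg, measurableEmbedding_neg.integrable_map_iff]
  exact hf

open Set in
private lemma uca_integrableOn_Ioi {z : ℝ} (hz : 0 < z) :
    IntegrableOn (fun t => Real.exp (-z * Real.cosh t)) (Ioi (0:ℝ)) := by
  have hcont : Continuous fun t : ℝ => Real.exp (-z * Real.cosh t) := by continuity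
  refine Integrable.mono'
    ((exp_neg_integrableOn_Ioi 0 (by linarith : (0:ℝ) < z/2)).const_mul (Real.exp (-(z/2))))
    hcont.aestronglyMeasurable.restrict ?_
  filter_upwards [ae_restrict_mem measurableSet_Ioi] with t ht
  rw [Real.norm_eq_abs, abs_of_pos (Real.exp_pos _), ← Real.exp_add]
  apply Real.exp_le_exp.2
  have h1 : (1 + t)/2 ≤ Real.cosh t := by
    have h2 := Real.add_one_le_exp t
    have h3 : (0:ℝ) < Real.exp (-t) := Real.exp_pos _
    rw [Real.cosh_eq]; linarith
  nlinarith

open Set in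
private lemma uca_even_integral {z : ℝ} (hz : 0 < z) :
    (∫ t : ℝ, Real.exp (-z * Real.cosh t))
      = 2 * ∫ t in Ioi (0:ℝ), Real.exp (-z * Real.cosh t) := by
  have hIoi := uca_integrableOn_Ioi hz
  have hIci : IntegrableOn (fun t => Real.exp (-z * Real.cosh t)) (Ici (0:ℝ)) :=
    (integrableOn_Ici_iff_integrableOn_Ioi (f := fun t => Real.exp (-z * Real.cosh t)) (b := 0)).2 hIoi
  have hIic : IntegrableOn (fun t => Real.exp (-z * Real.cosh t)) (Iic (0:ℝ)) := by
    apply uca_integrableOn_Iic_of_Ici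
    simpa [Real.cosh_neg] using hIci
  have hint : Integrable fun t : ℝ => Real.exp (-z * Real.cosh t) := by
    rw [← integrableOn_univ, ← Iic_union_Ioi (a := (0:ℝ)), integrableOn_union]
    exact ⟨hIic, hIoi⟩
  have hsplit := integral_add_compl (s := Iic (0:ℝ)) measurableSet_Iic hint
  rw [compl_Iic] at hsplit
  have hneg : (∫ t in Iic (0:ℝ), Real.exp (-z * Real.cosh t))
      = ∫ t in Ioi (0:ℝ), Real.exp (-z * Real.cosh t) := by
    have := integral_comp_neg_Iic (0:ℝ) (fun t => Real.exp (-z * Real.cosh t))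
    simpa [Real.cosh_neg] using this
  rw [← hsplit, hneg]; ring

open Set in
private lemma uca_change_of_variables {A k : ℝ} (hA : 0 < A) (hk : 0 < k) :
    ∫ τ in Ioi (0:ℝ), (1/τ) * Real.exp (-A/τ - k*τ)
      = ∫ t : ℝ, Real.exp (-(2 * Real.sqrt (A*k)) * Real.cosh t) := by
  set α := Real.sqrt (A/k) with hαdef
  have hαpos : 0 < α := Real.sqrt_pos.2 (div_pos hA hk)
  set s := Real.sqrt (A*k) with hsdef
  have hspos : 0 < s := Real.sqrt_pos.2 (mul_pos hA hk)
  have h1 : α * s = A := by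
    rw [hαdef, hsdef, ← Real.sqrt_mul (div_pos hA hk).le]
    rw [show A / k * (A * k) = A^2 by field_simp, Real.sqrt_sq hA.le]
  have h2 : k * α = s := by
    rw [hαdef, hsdef, show A * k = k^2 * (A/k) by field_simp,
      Real.sqrt_mul (sq_nonneg k), Real.sqrt_sq hk.le]
  have himg : (fun t : ℝ => α * Real.exp t) '' univ = Ioi 0 := by
    rw [image_univ]
    ext τ
    simp only [mem_range, mem_Ioi]
    constructor
    · rintro ⟨t, rfl⟩; positivity
    · intro hτ
      refine ⟨Real.log (τ/α), ?_⟩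
      rw [Real.exp_log (by positivity)]
      field_simp
  rw [← himg, integral_image_eq_integral_abs_deriv_smul MeasurableSet.univ
    (fun x _ => ((Real.hasDerivAt_exp x).const_mul α).hasDerivWithinAt)
    (fun x _ y _ h => Real.exp_injective (mul_left_cancel₀ hαpos.ne' h)), setIntegral_univ]
  congr 1
  funext x
  have hE : (0:ℝ) < Real.exp x := Real.exp_pos x
  have hαE : (0:ℝ) < α * Real.exp x := by positivity
  rw [smul_eq_mul, abs_of_pos hαE]
  have hexp : -A/(α * Real.exp x) - k * (α * Real.exp x) = -(2*s) * Real.cosh x := by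
    have e1 : -A/(α * Real.exp x) = -(s / Real.exp x) := by
      rw [← h1]; field_simp
    have e2 : k * (α * Real.exp x) = s * Real.exp x := by
      rw [← mul_assoc, h2]
    rw [e1, e2, Real.cosh_eq, Real.exp_neg]
    field_simp
    ring
  rw [hexp]
  field_simp

/-- For `D > 0`, `k > 0`, `q > 0`, `R₀ > 0` and `b ∈ ℝ²` with `b ≠ 0`, the asymptotic channel
response under the uniform concentration assumption has the closed form
`π·R₀²·q·∫₀^∞ C(b, τ) dτ = (q·R₀²/(2D))·K₀(|b|·√(k/D))`. -/
theorem uca_asymptotic_channel_response (D k q R₀ : ℝ) (b : EuclideanSpace ℝ (Fin 2))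
    (hD : 0 < D) (hk : 0 < k) (hq : 0 < q) (hR₀ : 0 < R₀) (hb : b ≠ 0) :
    π * R₀ ^ 2 * q * ∫ τ in Set.Ioi (0 : ℝ), heatKernel2D D k b τ =
      (q * R₀ ^ 2 / (2 * D)) * besselK0 (‖b‖ * Real.sqrt (k / D)) := by
  have hbn : 0 < ‖b‖ := norm_pos_iff.2 hb
  set A : ℝ := ‖b‖^2 / (4*D) with hAdef
  have hA : 0 < A := by positivity
  have hz : ‖b‖ * Real.sqrt (k/D) = 2 * Real.sqrt (A*k) := by
    have h : A * k = (‖b‖ * Real.sqrt (k/D) / 2)^2 := by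
      rw [hAdef, div_pow, mul_pow, Real.sq_sqrt (div_nonneg hk.le hD.le)]
      field_simp
      ring
    rw [h, Real.sqrt_sq (by positivity)]
    ring
  have hker : ∀ τ : ℝ, heatKernel2D D k b τ = (1/(4*π*D)) * ((1/τ) * Real.exp (-A/τ - k*τ)) := by
    intro τ
    rw [heatKernel2D, hAdef]
    ring_nf
  have hint : (∫ τ in Set.Ioi (0:ℝ), heatKernel2D D k b τ)
      = (1/(4*π*D)) * ∫ τ in Set.Ioi (0:ℝ), (1/τ) * Real.exp (-A/τ - k*τ) := by
    rw [← integral_const_mul]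
    exact setIntegral_congr_fun measurableSet_Ioi (fun τ _ => hker τ)
  have hzpos : 0 < 2 * Real.sqrt (A*k) := by positivity
  rw [hint, uca_change_of_variables hA hk, uca_even_integral hzpos, besselK0, hz]
  have hπ : π ≠ 0 := Real.pi_ne_zero
  field_simp
  ring
end

section
/- For all q > 0, k > 0, D > 0 and R₀ > 0, the integral identity ∫₀^∞ q·exp(−kτ)·(1 − exp(−R₀²/(4Dτ))) dτ = (q/k)·(1 − √(k/D)·R₀·K₁(√(k/D)·R₀)) holds, where K₁(z) = ∫₀^∞ exp(−z·cosh t)·cosh t dt. -/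
set_option maxHeartbeats 1000000

open Real MeasureTheory

lemma mul_sqrt_div_aux {a k : ℝ} (ha : 0 ≤ a) (hk : 0 < k) :
    k * Real.sqrt (a / k) = Real.sqrt (a * k) := by
  rw [show a * k = k ^ 2 * (a / k) by field_simp, Real.sqrt_mul (sq_nonneg k),
    Real.sqrt_sq hk.le]

lemma integrableOn_g {a k : ℝ} (ha : 0 < a) (hk : 0 < k) :
    IntegrableOn (fun τ : ℝ => Real.exp (-(k * τ + a / τ))) (Set.Ioi 0) := by
  refine (exp_neg_integrableOn_Ioi 0 hk).mono' ?_ ?_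
  · exact (((measurable_const.mul measurable_id).add
      (measurable_const.div measurable_id)).neg.exp).aestronglyMeasurable
  · filter_upwards [ae_restrict_mem measurableSet_Ioi] with τ hτ
    rw [Real.norm_eq_abs, abs_of_pos (Real.exp_pos _)]
    apply Real.exp_le_exp.2
    have h0 : 0 ≤ a / τ := le_of_lt (div_pos ha hτ)
    linarith

lemma integral_exp_neg_mul_Ioi_zero {k : ℝ} (hk : 0 < k) :
    ∫ τ in Set.Ioi (0 : ℝ), Real.exp (-(k * τ)) = 1 / k := by
  have h := integral_Ioi_of_hasDerivAt_of_tendsto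
    (f := fun x : ℝ => -Real.exp (-(k * x)) / k) (f' := fun x => Real.exp (-(k * x)))
    (a := (0 : ℝ)) (m := 0) ?_ ?_ ?_ ?_
  · rw [h]; field_simp; simp
  · apply Continuous.continuousWithinAt; fun_prop
  · intro x _
    have : HasDerivAt (fun x : ℝ => Real.exp (-(k * x))) (Real.exp (-(k * x)) * -k) x := by
      have h1 : HasDerivAt (fun x : ℝ => -(k * x)) (-k) x := by
        simpa using ((hasDerivAt_id x).const_mul k).fun_neg
      exact (Real.hasDerivAt_exp _).comp x h1
    have := (this.div_const k).neg
    convert this using 1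
    · funext x; simp only [Pi.neg_apply]; ring
    · field_simp
  · simpa using (exp_neg_integrableOn_Ioi 0 hk).congr_fun
      (fun x _ => by ring_nf) measurableSet_Ioi
  · have h0 : Filter.Tendsto (fun x : ℝ => k * x) Filter.atTop Filter.atTop :=
      Filter.Tendsto.const_mul_atTop hk Filter.tendsto_id
    have h1 : Filter.Tendsto (fun x : ℝ => -(k * x)) Filter.atTop Filter.atBot :=
      Filter.tendsto_neg_atBot_iff.2 h0
    have h2 : Filter.Tendsto (fun x : ℝ => Real.exp (-(k * x))) Filter.atTop (nhds 0) :=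
      Real.tendsto_exp_atBot.comp h1
    have h3 := (h2.div_const k).neg
    simpa [neg_div] using h3

lemma range_const_mul_exp {c : ℝ} (hc : 0 < c) :
    (fun t : ℝ => c * Real.exp t) '' Set.univ = Set.Ioi 0 := by
  ext y
  simp only [Set.image_univ, Set.mem_range, Set.mem_Ioi]
  constructor
  · rintro ⟨t, rfl⟩; positivity
  · intro hy
    exact ⟨Real.log (y / c), by rw [Real.exp_log (div_pos hy hc)]; field_simp⟩

lemma integral_exp_neg_add_div {a k : ℝ} (ha : 0 < a) (hk : 0 < k) :
    ∫ τ in Set.Ioi (0 : ℝ), Real.exp (-(k * τ + a / τ)) =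
      2 * Real.sqrt (a / k) * besselK1 (2 * Real.sqrt (a * k)) := by
  set c : ℝ := Real.sqrt (a / k) with hc_def
  set s : ℝ := Real.sqrt (a * k) with hs_def
  have hc : 0 < c := Real.sqrt_pos.2 (div_pos ha hk)
  have hs : 0 < s := Real.sqrt_pos.2 (mul_pos ha hk)
  have hkc : k * c = s := mul_sqrt_div_aux ha.le hk
  have hsc : s * c = a := by
    rw [hc_def, hs_def, ← Real.sqrt_mul (by positivity),
      show a * k * (a / k) = a ^ 2 by field_simp, Real.sqrt_sq ha.le]
  have hac : a / c = s := by field_simp [hc.ne'] at hsc ⊢; linarith [hsc]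
  -- exponent identity
  have hexp : ∀ t : ℝ, k * (c * Real.exp t) + a / (c * Real.exp t)
      = 2 * s * Real.cosh t := by
    intro t
    have h1 : a / (c * Real.exp t) = (a / c) * Real.exp (-t) := by
      rw [Real.exp_neg]; field_simp
    rw [h1, hac, Real.cosh_eq]
    have : k * (c * Real.exp t) = (k * c) * Real.exp t := by ring
    rw [this, hkc]; ring
  -- change of variables
  have hderiv : ∀ x ∈ (Set.univ : Set ℝ),
      HasDerivWithinAt (fun t => c * Real.exp t) (c * Real.exp x) Set.univ x :=
    fun x _ => ((Real.hasDerivAt_exp x).const_mul c).hasDerivWithinAt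
  have hinj : Set.InjOn (fun t => c * Real.exp t) Set.univ := fun x _ y _ h =>
    Real.exp_injective (mul_left_cancel₀ hc.ne' h)
  have hCOV := integral_image_eq_integral_abs_deriv_smul
    MeasurableSet.univ hderiv hinj (fun τ => Real.exp (-(k * τ + a / τ)))
  rw [range_const_mul_exp hc] at hCOV
  have hH : ∀ t : ℝ, |c * Real.exp t| • Real.exp (-(k * (c * Real.exp t) + a / (c * Real.exp t)))
      = c * (Real.exp t * Real.exp (-(2 * s) * Real.cosh t)) := by
    intro t
    rw [abs_of_pos (by positivity), smul_eq_mul, hexp t]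
    ring_nf
  rw [hCOV, Measure.restrict_univ]
  simp_rw [hH]
  rw [MeasureTheory.integral_const_mul]
  -- now compute ∫ t, exp t * exp (-(2s) cosh t) = 2 * besselK1 (2s)
  set z : ℝ := 2 * s with hz_def
  set H : ℝ → ℝ := fun t => Real.exp t * Real.exp (-z * Real.cosh t) with hH_def
  -- integrability of H
  have hgint := integrableOn_g ha hk
  have hHint : Integrable H := by
    have := (integrableOn_image_iff_integrableOn_abs_deriv_smul MeasurableSet.univ hderiv hinj
      (fun τ => Real.exp (-(k * τ + a / τ)))).1 (by rwa [range_const_mul_exp hc])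
    rw [integrableOn_univ] at this
    have heq : (fun x => |c * Real.exp x| •
        Real.exp (-(k * (c * Real.exp x) + a / (c * Real.exp x)))) = fun t => c * H t := by
      funext t; exact hH t
    rw [heq] at this
    have : Integrable (fun t => c⁻¹ * (c * H t)) := this.const_mul c⁻¹
    simpa [inv_mul_cancel_left₀ hc.ne'] using this
  have hIiC : ∫ t in Set.Iic (0 : ℝ), H t = ∫ t in Set.Ioi (0 : ℝ), H (-t) := by
    rw [integral_comp_neg_Ioi]; norm_num
  have hHneg : ∀ t : ℝ, H (-t) = Real.exp (-t) * Real.exp (-z * Real.cosh t) := by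
    intro t; simp [hH_def, Real.cosh_neg]
  have hsplit : ∫ t, H t = (∫ t in Set.Iic (0:ℝ), H t) + ∫ t in Set.Ioi (0:ℝ), H t :=
    (intervalIntegral.integral_Iic_add_Ioi hHint.integrableOn hHint.integrableOn).symm
  have hHcont : Continuous H := by rw [hH_def]; fun_prop
  have hnegint : IntegrableOn (fun t => H (-t)) (Set.Ioi 0) := by
    refine hHint.integrableOn.mono' ?_ ?_
    · exact (hHcont.comp continuous_neg).aestronglyMeasurable
    · filter_upwards [ae_restrict_mem measurableSet_Ioi] with t ht
      rw [hHneg t, Real.norm_eq_abs, abs_of_pos (by positivity), hH_def]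
      have : Real.exp (-t) ≤ Real.exp t := Real.exp_le_exp.2 (by simp at ht ⊢; linarith)
      exact mul_le_mul_of_nonneg_right this (Real.exp_pos _).le
  have hsum : (∫ t in Set.Ioi (0:ℝ), H (-t)) + ∫ t in Set.Ioi (0:ℝ), H t
      = 2 * besselK1 z := by
    rw [← MeasureTheory.integral_add hnegint hHint.integrableOn]
    have : ∀ t : ℝ, H (-t) + H t = 2 * (Real.exp (-z * Real.cosh t) * Real.cosh t) := by
      intro t
      have h2c : Real.exp (-t) + Real.exp t = 2 * Real.cosh t := by rw [Real.cosh_eq]; ring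
      calc H (-t) + H t = (Real.exp (-t) + Real.exp t) * Real.exp (-z * Real.cosh t) := by
            rw [hHneg t, hH_def]; ring
        _ = 2 * (Real.exp (-z * Real.cosh t) * Real.cosh t) := by rw [h2c]; ring
    simp_rw [this]
    rw [MeasureTheory.integral_const_mul, besselK1]
  rw [hsplit, hIiC, hsum]
  ring

/-- For all `q > 0`, `k > 0`, `D > 0` and `R₀ > 0`,
`∫₀^∞ q·exp(−kτ)·(1 − exp(−R₀²/(4Dτ))) dτ = (q/k)·(1 − √(k/D)·R₀·K₁(√(k/D)·R₀))`. -/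
theorem time_integral_eq_self_response (q k D R₀ : ℝ)
    (hq : 0 < q) (hk : 0 < k) (hD : 0 < D) (hR₀ : 0 < R₀) :
    ∫ τ in Set.Ioi (0 : ℝ), q * Real.exp (-k * τ) * (1 - Real.exp (-R₀ ^ 2 / (4 * D * τ))) =
      (q / k) * (1 - Real.sqrt (k / D) * R₀ * besselK1 (Real.sqrt (k / D) * R₀)) := by
  set a : ℝ := R₀ ^ 2 / (4 * D) with ha_def
  have ha : 0 < a := by positivity
  -- rewrite the integrand as a difference
  have heqOn : Set.EqOn
      (fun τ => q * Real.exp (-k * τ) * (1 - Real.exp (-R₀ ^ 2 / (4 * D * τ))))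
      (fun τ => q * Real.exp (-(k * τ)) - q * Real.exp (-(k * τ + a / τ)))
      (Set.Ioi 0) := by
    intro τ hτ
    have hτ0 : (0:ℝ) < τ := hτ
    have h1 : -R₀ ^ 2 / (4 * D * τ) = -(a / τ) := by
      rw [ha_def]; field_simp
    have h2 : Real.exp (-(k * τ)) * Real.exp (-(a / τ)) = Real.exp (-(k * τ + a / τ)) := by
      rw [← Real.exp_add]; ring_nf
    simp only [h1, neg_mul, ← h2]
    ring
  rw [MeasureTheory.setIntegral_congr_fun measurableSet_Ioi heqOn]
  have hI1 : IntegrableOn (fun τ : ℝ => q * Real.exp (-(k * τ))) (Set.Ioi 0) := by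
    have := (exp_neg_integrableOn_Ioi 0 hk).const_mul q
    simp at this; exact this
  have hI2 : IntegrableOn (fun τ : ℝ => q * Real.exp (-(k * τ + a / τ))) (Set.Ioi 0) :=
    (integrableOn_g ha hk).const_mul q
  rw [MeasureTheory.integral_sub hI1 hI2, MeasureTheory.integral_const_mul,
    MeasureTheory.integral_const_mul, integral_exp_neg_mul_Ioi_zero hk,
    integral_exp_neg_add_div ha hk]
  -- algebraic identities with square roots
  have h2s : 2 * Real.sqrt (a * k) = Real.sqrt (k / D) * R₀ := by
    have h1 : Real.sqrt (k / D) * R₀ = Real.sqrt (k / D * R₀ ^ 2) := by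
      rw [Real.sqrt_mul (by positivity), Real.sqrt_sq hR₀.le]
    have h2 : k / D * R₀ ^ 2 = 2 ^ 2 * (a * k) := by rw [ha_def]; field_simp; ring
    have h3 : (2:ℝ) ^ 2 * (a * k) = (2 * Real.sqrt (a * k)) ^ 2 := by
      rw [mul_pow, Real.sq_sqrt (mul_pos ha hk).le]
    rw [h1, h2, h3, Real.sqrt_sq (by positivity)]
  have hck : k * (2 * Real.sqrt (a / k)) = 2 * Real.sqrt (a * k) := by
    rw [show k * (2 * Real.sqrt (a / k)) = 2 * (k * Real.sqrt (a / k)) by ring,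
      mul_sqrt_div_aux ha.le hk]
  have hck' : 2 * Real.sqrt (a / k) = Real.sqrt (k / D) * R₀ / k := by
    rw [← h2s, ← hck]; field_simp
  rw [h2s, hck']
  field_simp
end

section
/- Let q > 0, k > 0, D > 0 and R₀ > 0, and for b ∈ ℝ² define N̄(b) = ∫₀^∞ ∫_{{y ∈ ℝ² : |y − b| ≤ R₀}} q·C(y, τ) dy dτ, the asymptotic channel response at a circular receiver of radius R₀ centered at b due to continuous emission at rate q from the origin. Then N̄(b) tends to (q/k)·(1 − √(k/D)·R₀·K₁(√(k/D)·R₀)) as b → 0 in ℝ², where K₁(z) = ∫₀^∞ exp(−z·cosh t)·cosh t dt. -/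
open Real MeasureTheory Filter Set Metric

local notation "E2" => EuclideanSpace ℝ (Fin 2)

lemma gauss_integrable {b : ℝ} (hb : 0 < b) :
    Integrable (fun y : E2 => Real.exp (-b * ‖y‖ ^ 2)) := by
  have h := (GaussianFourier.integrable_cexp_neg_mul_sq_norm_add
    (V := E2) (b := (b : ℂ)) (by simpa using hb) 0 0).norm
  refine h.congr (Filter.EventuallyEq.of_eq ?_)
  funext y
  rw [Complex.norm_exp]
  congr 1
  simp [← Complex.ofReal_pow]

lemma gauss_integral {b : ℝ} (hb : 0 < b) :
    ∫ y : E2, Real.exp (-b * ‖y‖ ^ 2) = π / b := by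
  have h := GaussianFourier.integral_rexp_neg_mul_sq_norm (V := E2) hb
  rw [h]
  norm_num [finrank_euclideanSpace]

lemma heat_eq (D k τ : ℝ) (y : E2) : heatKernel2D D k y τ
    = (Real.exp (-(k*τ)) / (4*π*D*τ)) * Real.exp (-(1/(4*D*τ)) * ‖y‖^2) := by
  unfold heatKernel2D
  rw [show -‖y‖ ^ 2 / (4 * D * τ) - k * τ = (-(1/(4*D*τ)) * ‖y‖^2) + (-(k*τ)) by ring,
    Real.exp_add]
  ring

lemma vol_unit_ball : (volume (ball (0:E2) 1)).toReal = π := by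
  rw [EuclideanSpace.volume_ball]
  norm_num
  exact Real.sq_sqrt Real.pi_nonneg

lemma ball_integral {D k R₀ : ℝ} (hD : 0 < D) (hR : 0 < R₀) {τ : ℝ} (hτ : 0 < τ) :
    ∫ y in closedBall (0:E2) R₀, heatKernel2D D k y τ
      = Real.exp (-(k*τ)) * (1 - Real.exp (-R₀^2/(4*D*τ))) := by
  set c := Real.exp (-(k*τ)) / (4*π*D*τ) with hc
  set b := 1/(4*D*τ) with hb
  have hbpos : 0 < b := by positivity
  set f : ℝ → ℝ := Set.indicator (Iic R₀) (fun r => c * Real.exp (-b * r^2)) with hf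
  have step1 : ∫ y in closedBall (0:E2) R₀, heatKernel2D D k y τ = ∫ y : E2, f ‖y‖ := by
    rw [← integral_indicator measurableSet_closedBall]
    congr 1
    funext y
    simp only [hf]
    by_cases hy : ‖y‖ ≤ R₀
    · rw [Set.indicator_of_mem (by simpa [mem_closedBall, dist_zero_right] using hy),
        Set.indicator_of_mem (show ‖y‖ ∈ Iic R₀ by simpa using hy), heat_eq]
    · rw [Set.indicator_of_notMem (by simpa [mem_closedBall, dist_zero_right] using hy),
        Set.indicator_of_notMem (show ‖y‖ ∉ Iic R₀ by simpa using hy)]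
  rw [step1, MeasureTheory.integral_fun_norm_addHaar volume f]
  rw [finrank_euclideanSpace_fin, measureReal_def, vol_unit_ball]
  have key : ∫ r in Ioi (0:ℝ), r ^ (2 - 1) • f r
      = c * (2 * D * τ * (1 - Real.exp (-R₀^2/(4*D*τ)))) := by
    have : ∀ r : ℝ, r ^ (2-1) • f r = Set.indicator (Iic R₀) (fun r => r * (c * Real.exp (-b * r^2))) r := by
      intro r
      by_cases hr : r ∈ Iic R₀
      · rw [hf, Set.indicator_of_mem hr, Set.indicator_of_mem hr]; simp
      · rw [hf, Set.indicator_of_notMem hr, Set.indicator_of_notMem hr]; simp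
    simp_rw [this]
    rw [MeasureTheory.setIntegral_indicator measurableSet_Iic,
      show Ioi (0:ℝ) ∩ Iic R₀ = Ioc 0 R₀ from Set.Ioi_inter_Iic,
      ← intervalIntegral.integral_of_le hR.le]
    have deriv : ∀ r ∈ Set.uIcc (0:ℝ) R₀, HasDerivAt (fun r : ℝ => -c/(2*b) * Real.exp (-b * r^2))
        (r * (c * Real.exp (-b * r^2))) r := by
      intro r _
      have h1 : HasDerivAt (fun r : ℝ => -b * r^2) (-b * (2*r)) r := by
        simpa using ((hasDerivAt_pow 2 r).const_mul (-b))
      have h2 := (h1.exp).const_mul (-c/(2*b))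
      refine h2.congr_deriv ?_
      rw [div_mul_eq_mul_div, div_eq_iff (mul_ne_zero two_ne_zero hbpos.ne')]
      ring
    rw [intervalIntegral.integral_eq_sub_of_hasDerivAt deriv (by
      apply Continuous.intervalIntegrable
      continuity)]
    simp only [hb]
    rw [show -(1/(4*D*τ)) * R₀^2 = -R₀^2/(4*D*τ) by ring]
    field_simp
    rw [show (0:ℝ) ^ 2 / (4 * D * τ) = 0 by simp, neg_zero, Real.exp_zero]
    ring
  rw [key]
  simp only [smul_eq_mul, nsmul_eq_mul, Nat.cast_ofNat]
  rw [hc]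
  have hπ := Real.pi_pos
  field_simp
  ring

lemma exp_neg_mul_integral {k : ℝ} (hk : 0 < k) :
    ∫ τ in Ioi (0:ℝ), Real.exp (-(k*τ)) = 1/k := by
  have := integral_comp_mul_left_Ioi (fun y => Real.exp (-y)) 0 hk
  simp only [mul_zero, smul_eq_mul, integral_exp_neg_Ioi_zero] at this
  rw [show (fun τ : ℝ => Real.exp (-(k*τ))) = fun τ : ℝ => Real.exp (-(k*τ)) from rfl]
  calc ∫ τ in Ioi (0:ℝ), Real.exp (-(k*τ)) = k⁻¹ * 1 := this
  _ = 1/k := by rw [mul_one, one_div]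

lemma exp_sub_div_integrableOn {k a : ℝ} (hk : 0 < k) (ha : 0 < a) :
    IntegrableOn (fun τ : ℝ => Real.exp (-(k*τ) - a/τ)) (Ioi 0) := by
  have hmeas : Measurable (fun τ : ℝ => Real.exp (-(k*τ) - a/τ)) := by
    apply Measurable.exp
    exact ((measurable_const.mul measurable_id).neg.sub
      (measurable_const.mul measurable_inv))
  refine Integrable.mono' (g := fun τ => Real.exp (-(k * τ)))
    ((exp_neg_integrableOn_Ioi 0 hk).congr (by filter_upwards with τ; rw [neg_mul]))
    hmeas.aestronglyMeasurable ?_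
  filter_upwards [ae_restrict_mem measurableSet_Ioi] with τ hτ
  rw [Real.norm_eq_abs, abs_of_pos (Real.exp_pos _)]
  apply Real.exp_le_exp.2
  have : 0 ≤ a / τ := le_of_lt (div_pos ha hτ)
  linarith

lemma img_up {c : ℝ} (hc : 0 < c) : (fun t : ℝ => c * Real.exp t) '' Ioi 0 = Ioi c := by
  ext x
  constructor
  · rintro ⟨t, ht, rfl⟩
    have h1 : 1 < Real.exp t := by
      rw [show (1:ℝ) = Real.exp 0 from (Real.exp_zero).symm]
      exact Real.exp_lt_exp.2 ht
    simpa using (by nlinarith : c < c * Real.exp t)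
  · intro hx
    have hx' : 1 < x / c := (one_lt_div hc).2 hx
    refine ⟨Real.log (x/c), ?_, ?_⟩
    · exact Real.log_pos hx'
    · show c * Real.exp (Real.log (x/c)) = x
      rw [Real.exp_log (by positivity)]
      field_simp
lemma img_down {c : ℝ} (hc : 0 < c) : (fun t : ℝ => c * Real.exp (-t)) '' Ioi 0 = Ioo 0 c := by
  ext x
  constructor
  · rintro ⟨t, ht, rfl⟩
    have h1 : Real.exp (-t) < 1 := Real.exp_lt_one_iff.2 (by simpa using ht)
    have h2 : 0 < Real.exp (-t) := Real.exp_pos _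
    refine ⟨by positivity, ?_⟩
    show c * Real.exp (-t) < c
    nlinarith
  · rintro ⟨hx0, hxc⟩
    have hx' : x / c < 1 := (div_lt_one hc).2 hxc
    refine ⟨-Real.log (x/c), ?_, ?_⟩
    · simpa using Real.log_neg (by positivity) hx'
    · show c * Real.exp (-(-Real.log (x/c))) = x
      rw [neg_neg, Real.exp_log (by positivity)]
      field_simp

lemma J_eq {k a : ℝ} (hk : 0 < k) (ha : 0 < a) :
    ∫ τ in Ioi (0:ℝ), Real.exp (-(k*τ) - a/τ)
      = (2 * Real.sqrt (a/k)) * besselK1 (2 * Real.sqrt (a*k)) := by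
  set c := Real.sqrt (a/k) with hcdef
  set z := 2 * Real.sqrt (a*k) with hzdef
  have hc : 0 < c := Real.sqrt_pos.2 (div_pos ha hk)
  have hcsq : c^2 = a/k := Real.sq_sqrt (le_of_lt (div_pos ha hk))
  have e1 : k * c = z/2 := by
    rw [hzdef, hcdef, show a/k = (a*k)/k^2 by field_simp,
      Real.sqrt_div (by positivity), Real.sqrt_sq hk.le]
    field_simp
  have e2 : a / c = z/2 := by
    rw [← e1]
    have h : k * c ^ 2 = a := by rw [hcsq]; field_simp
    field_simp
    nlinarith [h]
  have hexp : ∀ t : ℝ, -(k*(c*Real.exp t)) - a/(c*Real.exp t) = -(z * Real.cosh t) := by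
    intro t
    have h1 : a / (c * Real.exp t) = (z/2) * Real.exp (-t) := by
      rw [Real.exp_neg, ← e2]
      field_simp
    rw [h1, show k * (c*Real.exp t) = (z/2) * Real.exp t by rw [← e1]; ring,
      Real.cosh_eq]
    ring
  have hexp' : ∀ t : ℝ, -(k*(c*Real.exp (-t))) - a/(c*Real.exp (-t)) = -(z * Real.cosh t) := by
    intro t
    rw [hexp (-t), Real.cosh_neg]
  have hIoi := exp_sub_div_integrableOn hk ha
  have hderivUp : ∀ t ∈ Ioi (0:ℝ), HasDerivWithinAt (fun t : ℝ => c * Real.exp t)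
      (c * Real.exp t) (Ioi 0) t :=
    fun t _ => ((Real.hasDerivAt_exp t).const_mul c).hasDerivWithinAt
  have hinjUp : InjOn (fun t : ℝ => c * Real.exp t) (Ioi 0) := by
    intro x _ y _ h
    exact Real.exp_injective (mul_left_cancel₀ hc.ne' h)
  have hderivDown : ∀ t ∈ Ioi (0:ℝ), HasDerivWithinAt (fun t : ℝ => c * Real.exp (-t))
      (c * (Real.exp (-t) * -1)) (Ioi 0) t :=
    fun t _ => (((hasDerivAt_neg t).exp).const_mul c).hasDerivWithinAt
  have hinjDown : InjOn (fun t : ℝ => c * Real.exp (-t)) (Ioi 0) := by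
    intro x _ y _ h
    have := Real.exp_injective (mul_left_cancel₀ hc.ne' h)
    linarith [neg_injective this]
  have i2 : ∫ τ in Ioi c, Real.exp (-(k*τ) - a/τ)
      = ∫ t in Ioi (0:ℝ), (c * Real.exp t) * Real.exp (-(z * Real.cosh t)) := by
    rw [← img_up hc, integral_image_eq_integral_abs_deriv_smul measurableSet_Ioi hderivUp hinjUp]
    refine setIntegral_congr_fun measurableSet_Ioi (fun t _ => ?_)
    rw [smul_eq_mul, abs_of_pos (by positivity), hexp t]
  have i1 : ∫ τ in Ioc (0:ℝ) c, Real.exp (-(k*τ) - a/τ)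
      = ∫ t in Ioi (0:ℝ), (c * Real.exp (-t)) * Real.exp (-(z * Real.cosh t)) := by
    rw [integral_Ioc_eq_integral_Ioo, ← img_down hc,
      integral_image_eq_integral_abs_deriv_smul measurableSet_Ioi hderivDown hinjDown]
    refine setIntegral_congr_fun measurableSet_Ioi (fun t _ => ?_)
    rw [smul_eq_mul, show |c * (Real.exp (-t) * -1)| = c * Real.exp (-t) by
      rw [abs_of_nonpos (by nlinarith [Real.exp_pos (-t), hc] : c * (Real.exp (-t) * -1) ≤ 0)]
      ring, hexp' t]
  have int2 : IntegrableOn (fun t : ℝ => (c * Real.exp t) * Real.exp (-(z * Real.cosh t)))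
      (Ioi 0) := by
    have := (integrableOn_image_iff_integrableOn_abs_deriv_smul measurableSet_Ioi hderivUp hinjUp
      (fun τ => Real.exp (-(k*τ) - a/τ))).1 (by rw [img_up hc]; exact hIoi.mono_set (Ioi_subset_Ioi hc.le))
    refine this.congr_fun (fun t _ => ?_) measurableSet_Ioi
    dsimp only
    rw [smul_eq_mul, abs_of_pos (by positivity), hexp t]
  have int1 : IntegrableOn (fun t : ℝ => (c * Real.exp (-t)) * Real.exp (-(z * Real.cosh t)))
      (Ioi 0) := by
    have := (integrableOn_image_iff_integrableOn_abs_deriv_smul measurableSet_Ioi hderivDown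
      hinjDown (fun τ => Real.exp (-(k*τ) - a/τ))).1 (by
        rw [img_down hc]
        exact hIoi.mono_set (fun x hx => hx.1))
    refine this.congr_fun (fun t _ => ?_) measurableSet_Ioi
    dsimp only
    rw [smul_eq_mul, show |c * (Real.exp (-t) * -1)| = c * Real.exp (-t) by
      rw [abs_of_nonpos (by nlinarith [Real.exp_pos (-t), hc] : c * (Real.exp (-t) * -1) ≤ 0)]
      ring, hexp' t]
  rw [← Ioc_union_Ioi_eq_Ioi hc.le,
    setIntegral_union (Ioc_disjoint_Ioi le_rfl) measurableSet_Ioi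
      (hIoi.mono_set (by rw [← Ioc_union_Ioi_eq_Ioi hc.le]; exact subset_union_left))
      (hIoi.mono_set (by rw [← Ioc_union_Ioi_eq_Ioi hc.le]; exact subset_union_right)),
    i1, i2, ← integral_add int1 int2]
  rw [show (2 * Real.sqrt (a/k)) * besselK1 z = ∫ t in Ioi (0:ℝ),
      (2 * c) * (Real.exp (-z * Real.cosh t) * Real.cosh t) from (MeasureTheory.integral_const_mul _ _).symm]
  refine setIntegral_congr_fun measurableSet_Ioi (fun t _ => ?_)
  rw [Real.cosh_eq, neg_mul]
  ring

lemma heat_integrable {D k τ : ℝ} (hD : 0 < D) (hτ : 0 < τ) :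
    Integrable (fun y : E2 => heatKernel2D D k y τ) := by
  have : (fun y : E2 => heatKernel2D D k y τ)
      = fun y => (Real.exp (-(k*τ)) / (4*π*D*τ)) * Real.exp (-(1/(4*D*τ)) * ‖y‖^2) := by
    funext y; exact heat_eq D k τ y
  rw [this]
  exact (gauss_integrable (by positivity)).const_mul _

lemma heat_integral {D k τ : ℝ} (hD : 0 < D) (hτ : 0 < τ) :
    ∫ y : E2, heatKernel2D D k y τ = Real.exp (-(k*τ)) := by
  have : (fun y : E2 => heatKernel2D D k y τ)
      = fun y => (Real.exp (-(k*τ)) / (4*π*D*τ)) * Real.exp (-(1/(4*D*τ)) * ‖y‖^2) := by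
    funext y; exact heat_eq D k τ y
  rw [this, MeasureTheory.integral_const_mul, gauss_integral (by positivity)]
  have hπ := Real.pi_pos
  field_simp

lemma heat_nonneg {D k τ : ℝ} (hD : 0 < D) (hτ : 0 < τ) (y : E2) :
    0 ≤ heatKernel2D D k y τ := by
  unfold heatKernel2D
  have hπ := Real.pi_pos
  positivity

lemma inner_tendsto {q k D R₀ : ℝ} (hq : 0 < q) (hD : 0 < D) (hR₀ : 0 < R₀)
    {τ : ℝ} (hτ : 0 < τ) :
    Tendsto (fun b : E2 => ∫ y in closedBall b R₀, q * heatKernel2D D k y τ) (nhds 0)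
      (nhds (∫ y in closedBall (0:E2) R₀, q * heatKernel2D D k y τ)) := by
  have hnn : ∀ y : E2, 0 ≤ q * heatKernel2D D k y τ :=
    fun y => mul_nonneg hq.le (heat_nonneg hD hτ y)
  simp_rw [← integral_indicator (measurableSet_closedBall)]
  have hsph : ∀ᵐ y : E2, ‖y‖ ≠ R₀ := by
    rw [ae_iff]
    convert Measure.addHaar_sphere (μ := (volume : Measure E2)) 0 R₀ using 2
    ext y
    simp [mem_sphere, dist_zero_right]
  refine tendsto_integral_filter_of_dominated_convergence
    (fun y => q * heatKernel2D D k y τ) ?_ ?_ ?_ ?_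
  · filter_upwards with b
    exact (((continuous_const.mul (by
        unfold heatKernel2D
        exact continuous_const.mul (Real.continuous_exp.comp (by continuity)))).aestronglyMeasurable
      (μ := (volume : Measure E2)))).indicator measurableSet_closedBall
  · filter_upwards with b
    filter_upwards with y
    have h0 : (0:ℝ) ≤ (closedBall b R₀).indicator (fun y => q * heatKernel2D D k y τ) y :=
      Set.indicator_apply_nonneg (fun _ => hnn y)
    rw [Real.norm_eq_abs, abs_of_nonneg h0]
    by_cases hmem : y ∈ closedBall b R₀
    · rw [Set.indicator_of_mem hmem]
    · rw [Set.indicator_of_notMem hmem]; exact hnn y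
  · exact (heat_integrable hD hτ).const_mul q
  · filter_upwards [hsph] with y hy
    rcases lt_or_gt_of_ne hy with h | h
    · have hmem : y ∈ closedBall (0:E2) R₀ := by
        rw [mem_closedBall, dist_zero_right]; exact h.le
      rw [Set.indicator_of_mem hmem]
      have hev : ∀ᶠ b : E2 in nhds 0,
          (closedBall b R₀).indicator (fun y => q * heatKernel2D D k y τ) y
            = q * heatKernel2D D k y τ := by
        filter_upwards [Metric.ball_mem_nhds (0:E2) (by linarith : 0 < R₀ - ‖y‖)] with b hb
        rw [mem_ball, dist_zero_right] at hb
        refine Set.indicator_of_mem ?_ _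
        rw [mem_closedBall, dist_eq_norm]
        calc ‖y - b‖ ≤ ‖y‖ + ‖b‖ := norm_sub_le y b
        _ ≤ R₀ := by linarith
      exact Tendsto.congr' (by filter_upwards [hev] with b hb; exact hb.symm) tendsto_const_nhds
    · have hmem : y ∉ closedBall (0:E2) R₀ := by
        rw [mem_closedBall, dist_zero_right]; linarith
      rw [Set.indicator_of_notMem hmem]
      have hev : ∀ᶠ b : E2 in nhds 0,
          (closedBall b R₀).indicator (fun y => q * heatKernel2D D k y τ) y = 0 := by
        filter_upwards [Metric.ball_mem_nhds (0:E2) (by linarith : 0 < ‖y‖ - R₀)] with b hb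
        rw [mem_ball, dist_zero_right] at hb
        refine Set.indicator_of_notMem ?_ _
        rw [mem_closedBall, dist_eq_norm]
        intro hcon
        have := norm_sub_norm_le y b
        linarith
      exact Tendsto.congr' (by filter_upwards [hev] with b hb; exact hb.symm) tendsto_const_nhds

lemma tau_integral {k D R₀ : ℝ} (hk : 0 < k) (hD : 0 < D) (hR₀ : 0 < R₀) :
    ∫ τ in Ioi (0:ℝ), Real.exp (-(k*τ)) * (1 - Real.exp (-R₀^2/(4*D*τ)))
      = 1/k - (Real.sqrt (k/D) * R₀ / k) * besselK1 (Real.sqrt (k/D) * R₀) := by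
  set a := R₀^2/(4*D) with hadef
  have ha : 0 < a := by positivity
  have hptw : ∀ τ ∈ Ioi (0:ℝ), Real.exp (-(k*τ)) * (1 - Real.exp (-R₀^2/(4*D*τ)))
      = Real.exp (-(k*τ)) - Real.exp (-(k*τ) - a/τ) := by
    intro τ hτ
    have hτ0 : τ ≠ 0 := ne_of_gt hτ
    rw [show -(k*τ) - a/τ = (-(k*τ)) + (-(a/τ)) by ring, Real.exp_add,
      show -(a/τ) = -R₀^2/(4*D*τ) by rw [hadef]; field_simp]
    ring
  rw [setIntegral_congr_fun measurableSet_Ioi hptw,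
    integral_sub ((exp_neg_integrableOn_Ioi 0 hk).congr (by filter_upwards with τ; rw [neg_mul]))
      (exp_sub_div_integrableOn hk ha),
    exp_neg_mul_integral hk, J_eq hk ha]
  have s1 : 2 * Real.sqrt (a*k) = Real.sqrt (k/D) * R₀ := by
    rw [show a*k = (k/D)*(R₀/2)^2 by rw [hadef]; field_simp; ring,
      Real.sqrt_mul (by positivity) ((R₀/2)^2), Real.sqrt_sq (by positivity)]
    ring
  have s2 : 2 * Real.sqrt (a/k) = Real.sqrt (k/D) * R₀ / k := by
    rw [show a/k = (k/D)*(R₀/(2*k))^2 by rw [hadef]; field_simp; ring,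
      Real.sqrt_mul (by positivity) ((R₀/(2*k))^2), Real.sqrt_sq (by positivity)]
    field_simp
  rw [s1, s2]

/-- For `q > 0`, `k > 0`, `D > 0` and `R₀ > 0`, the asymptotic channel response
`N̄(b) = ∫₀^∞ ∫_{|y − b| ≤ R₀} q·C(y, τ) dy dτ` at a circular receiver of radius `R₀` centered
at `b`, due to continuous emission at rate `q` from the origin, tends to
`(q/k)·(1 − √(k/D)·R₀·K₁(√(k/D)·R₀))` as `b → 0` in `ℝ²`. -/
theorem channel_response_tendsto_self_response (q k D R₀ : ℝ)
    (hq : 0 < q) (hk : 0 < k) (hD : 0 < D) (hR₀ : 0 < R₀) :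
    Tendsto
      (fun b : EuclideanSpace ℝ (Fin 2) =>
        ∫ τ in Set.Ioi (0 : ℝ),
          ∫ y in {y : EuclideanSpace ℝ (Fin 2) | ‖y - b‖ ≤ R₀}, q * heatKernel2D D k y τ)
      (nhds 0)
      (nhds ((q / k) * (1 - Real.sqrt (k / D) * R₀ * besselK1 (Real.sqrt (k / D) * R₀)))) := by
  have hset : ∀ b : E2, {y : E2 | ‖y - b‖ ≤ R₀} = closedBall b R₀ := by
    intro b; ext y; simp [mem_closedBall, dist_eq_norm]
  simp only [hset]
  have hnn : ∀ τ : ℝ, 0 < τ → ∀ y : E2, 0 ≤ q * heatKernel2D D k y τ :=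
    fun τ hτ y => mul_nonneg hq.le (heat_nonneg hD hτ y)
  have hF : ∀ τ ∈ Ioi (0:ℝ), (∫ y in closedBall (0:E2) R₀, q * heatKernel2D D k y τ)
      = q * (Real.exp (-(k*τ)) * (1 - Real.exp (-R₀^2/(4*D*τ)))) := by
    intro τ hτ
    rw [MeasureTheory.integral_const_mul, ball_integral hD hR₀ hτ]
  have hval : (∫ τ in Ioi (0:ℝ), ∫ y in closedBall (0:E2) R₀, q * heatKernel2D D k y τ)
      = (q/k) * (1 - Real.sqrt (k/D) * R₀ * besselK1 (Real.sqrt (k/D) * R₀)) := by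
    rw [setIntegral_congr_fun measurableSet_Ioi hF, MeasureTheory.integral_const_mul,
      tau_integral hk hD hR₀]
    ring
  rw [← hval]
  refine tendsto_integral_filter_of_dominated_convergence
    (fun τ => q * Real.exp (-(k*τ))) ?_ ?_ ?_ ?_
  · filter_upwards with b
    have hbase : Measurable (fun p : ℝ × E2 => q * heatKernel2D D k p.2 p.1) := by
      unfold heatKernel2D
      apply Measurable.const_mul
      apply Measurable.mul
      · exact measurable_const.div (measurable_fst.const_mul (4*π*D))
      · apply Measurable.exp
        apply Measurable.sub
        · exact ((measurable_snd.norm.pow measurable_const).neg.div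
            (measurable_fst.const_mul (4*D)))
        · exact measurable_fst.const_mul _
    have hm : StronglyMeasurable (fun p : ℝ × E2 =>
        Set.indicator ((univ : Set ℝ) ×ˢ closedBall b R₀)
          (fun p : ℝ × E2 => q * heatKernel2D D k p.2 p.1) p) :=
      (hbase.indicator (MeasurableSet.univ.prod measurableSet_closedBall)).stronglyMeasurable
    have hsm := hm.integral_prod_right' (ν := (volume : Measure E2))
    have heq : (fun τ : ℝ => ∫ y in closedBall b R₀, q * heatKernel2D D k y τ)
        = fun τ : ℝ => ∫ y : E2, Set.indicator ((univ : Set ℝ) ×ˢ closedBall b R₀)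
            (fun p : ℝ × E2 => q * heatKernel2D D k p.2 p.1) (τ, y) := by
      funext τ
      rw [← integral_indicator measurableSet_closedBall]
      congr 1
      funext y
      by_cases hy : y ∈ closedBall b R₀
      · rw [Set.indicator_of_mem hy, Set.indicator_of_mem (by exact ⟨trivial, hy⟩)]
      · rw [Set.indicator_of_notMem hy, Set.indicator_of_notMem (by
          intro hcon; exact hy hcon.2)]
    rw [heq]
    exact hsm.aestronglyMeasurable.restrict
  · filter_upwards with b
    rw [ae_restrict_iff' measurableSet_Ioi]
    filter_upwards with τ hτ
    have h1 : 0 ≤ ∫ y in closedBall b R₀, q * heatKernel2D D k y τ :=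
      setIntegral_nonneg measurableSet_closedBall (fun y _ => hnn τ hτ y)
    have h2 : (∫ y in closedBall b R₀, q * heatKernel2D D k y τ)
        ≤ ∫ y : E2, q * heatKernel2D D k y τ :=
      setIntegral_le_integral ((heat_integrable hD hτ).const_mul q)
        (Eventually.of_forall (hnn τ hτ))
    rw [Real.norm_eq_abs, abs_of_nonneg h1]
    calc (∫ y in closedBall b R₀, q * heatKernel2D D k y τ)
        ≤ ∫ y : E2, q * heatKernel2D D k y τ := h2
    _ = q * Real.exp (-(k*τ)) := by
        rw [MeasureTheory.integral_const_mul, heat_integral hD hτ]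
  · exact ((exp_neg_integrableOn_Ioi 0 hk).congr
      (by filter_upwards with τ; rw [neg_mul])).const_mul q
  · filter_upwards [ae_restrict_mem measurableSet_Ioi] with τ hτ
    exact inner_tendsto hq hD hR₀ hτ
end

section
/- For every z > 0, the inequality 0 < z·K₁(z) < 1 holds, where K₁(z) = ∫₀^∞ exp(−z·cosh t)·cosh t dt. Consequently, for all q > 0, k > 0, D > 0 and R₀ > 0, the asymptotic self-channel response (q/k)·(1 − √(k/D)·R₀·K₁(√(k/D)·R₀)) is strictly between 0 and q/k. -/
open Real MeasureTheory

lemma aux_hasDeriv (z t : ℝ) :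
    HasDerivAt (fun t => -Real.exp (-z * Real.sinh t))
      (z * (Real.exp (-z * Real.sinh t) * Real.cosh t)) t := by
  have h1 : HasDerivAt (fun t => -z * Real.sinh t) (-z * Real.cosh t) t :=
    (Real.hasDerivAt_sinh t).const_mul (-z)
  have := (h1.exp).neg
  exact this.congr_deriv (by ring)

lemma aux_g_int_eq (z : ℝ) (hz : 0 < z) :
    (∫ t in Set.Ioi (0 : ℝ), z * (Real.exp (-z * Real.sinh t) * Real.cosh t)) = 1 ∧
    IntegrableOn (fun t => z * (Real.exp (-z * Real.sinh t) * Real.cosh t)) (Set.Ioi 0) := by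
  have hderiv : ∀ x ∈ Set.Ici (0:ℝ), HasDerivAt (fun t => -Real.exp (-z * Real.sinh t))
      (z * (Real.exp (-z * Real.sinh x) * Real.cosh x)) x := fun x _ => aux_hasDeriv z x
  have hpos : ∀ x ∈ Set.Ioi (0:ℝ), 0 ≤ z * (Real.exp (-z * Real.sinh x) * Real.cosh x) :=
    fun x _ => by positivity
  have htend : Filter.Tendsto (fun t => -Real.exp (-z * Real.sinh t)) Filter.atTop (nhds 0) := by
    have h1 : Filter.Tendsto (fun t => -z * Real.sinh t) Filter.atTop Filter.atBot := by
      refine (Filter.tendsto_const_mul_atBot_of_neg (by linarith : -z < 0)).2 ?_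
      have hbase : Filter.Tendsto (fun x : ℝ => (Real.exp x + -1) / 2) Filter.atTop Filter.atTop :=
        (Filter.tendsto_atTop_add_const_right _ (-1) Real.tendsto_exp_atTop).atTop_div_const
          two_pos
      refine Filter.tendsto_atTop_mono' _ ?_ hbase
      filter_upwards [Filter.eventually_ge_atTop (0:ℝ)] with x hx
      rw [Real.sinh_eq]
      have : Real.exp (-x) ≤ 1 := Real.exp_le_one_iff.2 (by linarith)
      linarith
    have := (Real.tendsto_exp_atBot.comp h1).neg
    simpa using this
  constructor
  · have := integral_Ioi_of_hasDerivAt_of_nonneg' hderiv hpos htend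
    simpa using this
  · exact integrableOn_Ioi_deriv_of_nonneg' hderiv hpos htend


/-- For every `z > 0`, `0 < z·K₁(z) < 1`; consequently, for all `q > 0`, `k > 0`, `D > 0` and
`R₀ > 0`, the asymptotic self-channel response `(q/k)·(1 − √(k/D)·R₀·K₁(√(k/D)·R₀))` is
strictly between `0` and `q/k`. -/
theorem self_response_bounds :
    (∀ z : ℝ, 0 < z →
      0 < z * besselK1 z ∧ z * besselK1 z < 1) ∧
    (∀ q k D R₀ : ℝ, 0 < q → 0 < k → 0 < D → 0 < R₀ →
      0 < (q / k) * (1 - Real.sqrt (k / D) * R₀ * besselK1 (Real.sqrt (k / D) * R₀)) ∧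
      (q / k) * (1 - Real.sqrt (k / D) * R₀ * besselK1 (Real.sqrt (k / D) * R₀)) < q / k) := by
  have main : ∀ z : ℝ, 0 < z → 0 < z * besselK1 z ∧ z * besselK1 z < 1 := by
    intro z hz
    set f : ℝ → ℝ := fun t => Real.exp (-z * Real.cosh t) * Real.cosh t with hfdef
    set g : ℝ → ℝ := fun t => Real.exp (-z * Real.sinh t) * Real.cosh t with hgdef
    obtain ⟨hgval, hgint'⟩ := aux_g_int_eq z hz
    have hgint : IntegrableOn g (Set.Ioi 0) := by
      have := hgint'.const_mul (1/z)
      simpa [hgdef, mul_assoc, one_div, inv_mul_cancel_left₀ hz.ne', IntegrableOn] using this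
    have hfle : ∀ t : ℝ, f t ≤ g t := by
      intro t
      have : Real.sinh t ≤ Real.cosh t := by
        rw [Real.sinh_eq, Real.cosh_eq]
        have := Real.exp_pos (-t); linarith
      have := Real.exp_le_exp.2 (by nlinarith : -z * Real.cosh t ≤ -z * Real.sinh t)
      exact mul_le_mul_of_nonneg_right this (Real.cosh_pos t).le
    have hfnn : ∀ t : ℝ, 0 ≤ f t := fun t => by positivity
    have hfcont : Continuous f := by
      exact ((continuous_const.mul Real.continuous_cosh).rexp).mul Real.continuous_cosh
    have hfint : IntegrableOn f (Set.Ioi 0) := by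
      refine Integrable.mono' hgint (hfcont.aestronglyMeasurable.restrict) ?_
      filter_upwards with t
      rw [Real.norm_of_nonneg (hfnn t)]; exact hfle t
    have hK : besselK1 z = ∫ t in Set.Ioi (0:ℝ), f t := rfl
    have hIpos : 0 < ∫ t in Set.Ioi (0:ℝ), f t := by
      rw [setIntegral_pos_iff_support_of_nonneg_ae
        (Filter.Eventually.of_forall fun t => hfnn t) hfint]
      have : Set.Ioi (0:ℝ) ⊆ Function.support f := by
        intro t _
        have : 0 < f t := by positivity
        exact this.ne'
      calc (0:ENNReal) < volume (Set.Ioi (0:ℝ)) := by simp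
        _ ≤ volume (Function.support f ∩ Set.Ioi 0) := by
            rw [Set.inter_eq_right.2 this]
    have hstrict : (∫ t in Set.Ioi (0:ℝ), f t) < ∫ t in Set.Ioi (0:ℝ), g t := by
      have hd : 0 < ∫ t in Set.Ioi (0:ℝ), (g t - f t) := by
        rw [setIntegral_pos_iff_support_of_nonneg_ae
          (Filter.Eventually.of_forall fun t => sub_nonneg.2 (hfle t)) (hgint.sub hfint)]
        have hsub : Set.Ioi (0:ℝ) ⊆ Function.support (fun t => g t - f t) := by
          intro t _
          have h1 : Real.sinh t < Real.cosh t := by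
            rw [Real.sinh_eq, Real.cosh_eq]
            have := Real.exp_pos (-t); linarith
          have h2 : Real.exp (-z * Real.cosh t) < Real.exp (-z * Real.sinh t) := by
            apply Real.exp_lt_exp.2; nlinarith
          have : f t < g t := by
            exact mul_lt_mul_of_pos_right h2 (Real.cosh_pos t)
          simpa [Function.mem_support] using (sub_pos.2 this).ne'
        calc (0:ENNReal) < volume (Set.Ioi (0:ℝ)) := by simp
          _ ≤ volume (Function.support (fun t => g t - f t) ∩ Set.Ioi 0) := by
              rw [Set.inter_eq_right.2 hsub]
      have := integral_sub hgint hfint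
      linarith [this ▸ hd]
    have hgval' : (∫ t in Set.Ioi (0:ℝ), g t) = 1 / z := by
      have : (∫ t in Set.Ioi (0:ℝ), z * g t) = z * ∫ t in Set.Ioi (0:ℝ), g t := by
        exact integral_const_mul z g
      rw [this] at hgval
      field_simp
      linarith [hgval]
    constructor
    · rw [hK]; positivity
    · have : z * besselK1 z < z * (1/z) := by
        rw [hK]
        apply mul_lt_mul_of_pos_left (hgval' ▸ hstrict) hz
      simpa [hz.ne'] using this
  refine ⟨main, ?_⟩
  intro q k D R₀ hq hk hD hR
  have hz : 0 < Real.sqrt (k / D) * R₀ := by positivity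
  obtain ⟨h1, h2⟩ := main _ hz
  have hqk : 0 < q / k := by positivity
  constructor
  · apply mul_pos hqk; linarith
  · nlinarith
end

section
/- Let q > 0, D > 0, k > 0, R₀ > 0 and let b ∈ ℝ² with b ≠ 0. Then the time-varying channel response under the uniform concentration assumption converges to its asymptotic closed form: the function t ↦ ∫₀^t (q·R₀²/(4Dτ))·exp(−|b|²/(4Dτ) − kτ) dτ tends to (q·R₀²/(2D))·K₀(|b|·√(k/D)) as t → ∞, where K₀(z) = ∫₀^∞ exp(−z·cosh t) dt. -/
open Real MeasureTheory Filter

open Set in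
/-- `t ≤ cosh t` for `t ≥ 0`. -/
lemma aux_self_le_cosh {t : ℝ} (ht : 0 ≤ t) : t ≤ Real.cosh t := by
  have h1 : t ≤ Real.sinh t := Real.self_le_sinh_iff.mpr ht
  have h2 : Real.sinh t ≤ Real.cosh t := by
    rw [Real.sinh_eq, Real.cosh_eq]
    have := Real.exp_pos (-t)
    linarith
  linarith

open Set in
lemma aux_integrable_exp_neg_cosh {z : ℝ} (hz : 0 < z) :
    Integrable (fun t : ℝ => Real.exp (-z * Real.cosh t)) := by
  have hmeas : AEStronglyMeasurable (fun t : ℝ => Real.exp (-z * Real.cosh t)) volume :=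
    (Real.continuous_exp.comp (continuous_const.mul Real.continuous_cosh)).aestronglyMeasurable
  have key : IntegrableOn (fun t : ℝ => Real.exp (-z * Real.cosh t)) (Ioi 0) := by
    refine Integrable.mono' (exp_neg_integrableOn_Ioi 0 hz) hmeas.restrict ?_
    filter_upwards [ae_restrict_mem measurableSet_Ioi] with t ht
    rw [Real.norm_eq_abs, abs_of_pos (Real.exp_pos _)]
    apply Real.exp_le_exp.2
    have := aux_self_le_cosh (le_of_lt ht)
    nlinarith
  have int_Iic : IntegrableOn (fun t : ℝ => Real.exp (-z * Real.cosh t)) (Iic 0) := by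
    rw [← Measure.map_neg_eq_self (volume : Measure ℝ)]
    have m : MeasurableEmbedding fun x : ℝ => -x := (Homeomorph.neg ℝ).measurableEmbedding
    rw [m.integrableOn_map_iff]
    simp_rw [Function.comp_def, Real.cosh_neg, neg_preimage, neg_Iic, neg_zero]
    exact Iff.mpr integrableOn_Ici_iff_integrableOn_Ioi key
  rw [← integrableOn_univ, ← Iic_union_Ioi (a := (0:ℝ))]
  exact int_Iic.union key

lemma aux_integral_exp_neg_cosh {z : ℝ} :
    (∫ t : ℝ, Real.exp (-z * Real.cosh t)) = 2 * besselK0 z := by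
  rw [besselK0, ← integral_comp_abs (f := fun t => Real.exp (-z * Real.cosh t))]
  simp [Real.cosh_abs]

open Set in
/-- For `q > 0`, `D > 0`, `k > 0`, `R₀ > 0` and `b ∈ ℝ²` with `b ≠ 0`, the time-varying channel
response under the uniform concentration assumption converges to its asymptotic closed form:
`t ↦ ∫₀^t (qR₀²/(4Dτ))·exp(−|b|²/(4Dτ) − kτ) dτ` tends to `(qR₀²/(2D))·K₀(|b|·√(k/D))`
as `t → ∞`. -/
theorem uca_time_varying_response_tendsto (q D k R₀ : ℝ) (b : EuclideanSpace ℝ (Fin 2))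
    (hq : 0 < q) (hD : 0 < D) (hk : 0 < k) (hR₀ : 0 < R₀) (hb : b ≠ 0) :
    Tendsto
      (fun t : ℝ => ∫ τ in (0 : ℝ)..t,
        (q * R₀ ^ 2 / (4 * D * τ)) * Real.exp (-‖b‖ ^ 2 / (4 * D * τ) - k * τ))
      atTop
      (nhds ((q * R₀ ^ 2 / (2 * D)) * besselK0 (‖b‖ * Real.sqrt (k / D)))) := by
  have hr : 0 < ‖b‖ := norm_pos_iff.mpr hb
  set r : ℝ := ‖b‖ with hrdef
  set sD := Real.sqrt D with hsDdef
  set sk := Real.sqrt k with hskdef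
  have hsD : 0 < sD := Real.sqrt_pos.mpr hD
  have hsk : 0 < sk := Real.sqrt_pos.mpr hk
  have hsD2 : sD * sD = D := Real.mul_self_sqrt hD.le
  have hsk2 : sk * sk = k := Real.mul_self_sqrt hk.le
  set z := r * Real.sqrt (k / D) with hzdef
  have hzval : z = r * sk / sD := by
    rw [hzdef, Real.sqrt_div hk.le D]; ring
  have hz : 0 < z := by
    rw [hzval]; positivity
  set m := r / (2 * sD * sk) with hmdef
  have hm : 0 < m := by rw [hmdef]; positivity
  set F : ℝ → ℝ := fun τ =>
    (q * R₀ ^ 2 / (4 * D * τ)) * Real.exp (-r ^ 2 / (4 * D * τ) - k * τ) with hFdef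
  set C := q * R₀ ^ 2 / (4 * D) with hCdef
  -- key pointwise identity
  have hpt : ∀ t : ℝ, |m * Real.exp t| • F (m * Real.exp t) = C * Real.exp (-z * Real.cosh t) := by
    intro t
    have he : 0 < Real.exp t := Real.exp_pos t
    have habs : |m * Real.exp t| = m * Real.exp t := abs_of_pos (by positivity)
    have hexparg : -r ^ 2 / (4 * D * (m * Real.exp t)) - k * (m * Real.exp t)
        = -z * Real.cosh t := by
      have key1 : r ^ 2 = 2 * D * m * z := by
        rw [hmdef, hzval]
        field_simp
        linear_combination hsD2
      have key2 : k * m = z / 2 := by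
        rw [hmdef, hzval]
        field_simp
        linear_combination (-1) * hsk2
      have hstep : -(2 * D * m * z) / (4 * D * (m * Real.exp t))
          = -(z / 2) * (Real.exp t)⁻¹ := by
        field_simp
        ring
      rw [Real.cosh_eq, Real.exp_neg,
        show -r ^ 2 / (4 * D * (m * Real.exp t)) - k * (m * Real.exp t)
          = -(2 * D * m * z) / (4 * D * (m * Real.exp t)) - (k * m) * Real.exp t from by
            rw [← key1]; ring,
        hstep, key2]
      ring
    rw [habs, hFdef]
    simp only [smul_eq_mul]
    rw [hexparg, hCdef,
      show (m * Real.exp t) * ((q * R₀ ^ 2 / (4 * D * (m * Real.exp t)))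
          * Real.exp (-z * Real.cosh t))
        = (q * R₀ ^ 2 * (m * Real.exp t) / ((4 * D) * (m * Real.exp t)))
          * Real.exp (-z * Real.cosh t) from by ring,
      mul_div_mul_right _ _ (by positivity : m * Real.exp t ≠ 0)]
  -- change of variables
  have hderiv : ∀ x ∈ (univ : Set ℝ),
      HasDerivWithinAt (fun t : ℝ => m * Real.exp t) (m * Real.exp x) univ x := fun x _ =>
    ((Real.hasDerivAt_exp x).const_mul m).hasDerivWithinAt
  have hinj : InjOn (fun t : ℝ => m * Real.exp t) univ := by
    intro x _ y _ h
    simpa using Real.exp_injective (mul_left_cancel₀ hm.ne' h)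
  have himg : (fun t : ℝ => m * Real.exp t) '' univ = Ioi (0 : ℝ) := by
    ext x
    simp only [image_univ, mem_range, mem_Ioi]
    constructor
    · rintro ⟨t, rfl⟩; positivity
    · intro hx
      exact ⟨Real.log (x / m), by rw [Real.exp_log (div_pos hx hm)]; field_simp⟩
  have hsub := integral_image_eq_integral_abs_deriv_smul MeasurableSet.univ hderiv hinj F
  rw [himg, Measure.restrict_univ] at hsub
  have hint_cosh := aux_integrable_exp_neg_cosh hz
  -- integrability of F on Ioi 0
  have hFint : IntegrableOn F (Ioi (0:ℝ)) := by
    rw [← himg, integrableOn_image_iff_integrableOn_abs_deriv_smul MeasurableSet.univ hderiv hinj]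
    rw [integrableOn_univ]
    exact ((hint_cosh.const_mul C).congr (Filter.Eventually.of_forall fun t => (hpt t).symm))
  -- value of the integral
  have hval : ∫ τ in Ioi (0:ℝ), F τ = q * R₀ ^ 2 / (2 * D) * besselK0 z := by
    rw [hsub]
    calc (∫ t : ℝ, |m * Real.exp t| • F (m * Real.exp t))
        = ∫ t : ℝ, C * Real.exp (-z * Real.cosh t) :=
          integral_congr_ae (Filter.Eventually.of_forall hpt)
      _ = C * ∫ t : ℝ, Real.exp (-z * Real.cosh t) := integral_const_mul _ _
      _ = C * (2 * besselK0 z) := by rw [aux_integral_exp_neg_cosh]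
      _ = q * R₀ ^ 2 / (2 * D) * besselK0 z := by rw [hCdef]; field_simp; ring
  have := intervalIntegral_tendsto_integral_Ioi 0 hFint tendsto_id
  rw [hval] at this
  exact this
end
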